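/- For the Pell and Pell–Lucas numbers and every natural number n ≥ 1, Σ_{i=0}^{n} P(i)²·Q(n−i)·P(n−i) = P(n)·( (n−1)·P(n+1) + (n+1)·P(n−1) ) / 8. -/

import Mathlib

noncomputable def pellR : ℕ → ℝ
  | 0 => 0
  | 1 => 1
  | n + 2 => 2 * pellR (n + 1) + pellR n

noncomputable def pellLucR : ℕ → ℝ
  | 0 => 2
  | 1 => 2
  | n + 2 => 2 * pellLucR (n + 1) + pellLucR n

lemma pellR_rec (n : ℕ) : pellR (n + 2) = 2 * pellR (n + 1) + pellR n := by simp [pellR]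

lemma pellLucR_rec (n : ℕ) : pellLucR (n + 2) = 2 * pellLucR (n + 1) + pellLucR n := by
  simp [pellLucR]

lemma L1 : ∀ n, pellLucR n + 2 * pellR n = 2 * pellR (n + 1) := by
  intro n
  induction n using Nat.twoStepInduction with
  | zero => norm_num [pellR, pellLucR]
  | one => norm_num [pellR, pellLucR]
  | more n ih ih1 =>
    rw [pellR_rec, pellLucR_rec, show n + 3 = (n + 1) + 2 by omega, pellR_rec]
    linear_combination 2 * ih1 + ih

lemma L2 (n : ℕ) : pellLucR (n + 1) = pellR (n + 2) + pellR n := by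
  linear_combination L1 (n + 1) + pellR_rec n

lemma L3 : ∀ b a : ℕ, pellLucR a * pellR b + pellLucR b * pellR a = 2 * pellR (a + b) := by
  intro b
  induction b using Nat.twoStepInduction with
  | zero => intro a; simp [pellR, pellLucR]
  | one =>
    intro a
    have h := L1 a
    show pellLucR a * pellR 1 + pellLucR 1 * pellR a = 2 * pellR (a + 1)
    simp only [pellR, pellLucR] at *
    linarith
  | more b ih ih1 =>
    intro a
    have h1 := ih a
    have h2 := ih1 a
    rw [show a + (b + 1) = (a + b) + 1 by omega] at h2
    rw [pellLucR_rec, pellR_rec, show a + (b + 2) = (a + b) + 2 by omega, pellR_rec]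
    linear_combination 2 * h2 + h1

lemma L4 (m : ℕ) : pellLucR m * pellR m = pellR (2 * m) := by
  have h := L3 m m
  rw [show m + m = 2 * m by omega] at h
  linarith

lemma cassini : ∀ n, pellR (n + 1) ^ 2 - 2 * pellR (n + 1) * pellR n - pellR n ^ 2 = (-1) ^ n := by
  intro n
  induction n with
  | zero => norm_num [pellR]
  | succ m ih =>
    rw [pellR_rec]
    linear_combination (-1 : ℝ) * ih

lemma L6 : ∀ n, pellLucR (2 * n) = 8 * pellR n ^ 2 + 2 * (-1) ^ n := by
  intro n
  induction n using Nat.twoStepInduction with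
  | zero => norm_num [pellR, pellLucR]
  | one => norm_num [pellR, pellLucR]
  | more n ih ih1 =>
    have e1 := pellLucR_rec (2 * n)
    have e2 := pellLucR_rec (2 * n + 1)
    have e3 := pellLucR_rec (2 * n + 2)
    rw [show 2 * n + 1 + 2 = 2 * n + 3 by omega] at e2
    rw [show 2 * n + 2 + 2 = 2 * n + 4 by omega, show 2 * n + 2 + 1 = 2 * n + 3 by omega] at e3
    have hc := cassini n
    rw [show 2 * (n + 1) = 2 * n + 2 by omega] at ih1
    rw [show 2 * (n + 2) = 2 * n + 4 by omega, pellR_rec]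
    linear_combination e3 + 2 * e2 - e1 + 6 * ih1 - ih + 16 * hc

lemma S1 (n : ℕ) :
    ∑ i ∈ Finset.range (n + 1), pellLucR (2 * i) * pellR (2 * (n - i)) =
      (n + 1 : ℝ) * pellR (2 * n) := by
  have hrefl := Finset.sum_range_reflect
    (fun i => pellLucR (2 * i) * pellR (2 * (n - i))) (n + 1)
  have e1 : ∑ i ∈ Finset.range (n + 1), pellLucR (2 * (n - i)) * pellR (2 * i)
      = ∑ i ∈ Finset.range (n + 1), pellLucR (2 * i) * pellR (2 * (n - i)) := by
    rw [← hrefl]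
    apply Finset.sum_congr rfl
    intro i hi
    have hin : i ≤ n := by simpa [Nat.lt_succ_iff] using hi
    rw [show n + 1 - 1 - i = n - i by omega, show n - (n - i) = i by omega]
  have key : ∀ i ∈ Finset.range (n + 1),
      pellLucR (2 * i) * pellR (2 * (n - i)) + pellLucR (2 * (n - i)) * pellR (2 * i)
        = 2 * pellR (2 * n) := by
    intro i hi
    have hin : i ≤ n := by simpa [Nat.lt_succ_iff] using hi
    have h := L3 (2 * (n - i)) (2 * i)
    rw [show 2 * i + 2 * (n - i) = 2 * n by omega] at h
    exact h
  have e2 : (∑ i ∈ Finset.range (n + 1), pellLucR (2 * i) * pellR (2 * (n - i)))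
      + ∑ i ∈ Finset.range (n + 1), pellLucR (2 * (n - i)) * pellR (2 * i)
      = ((n : ℝ) + 1) * (2 * pellR (2 * n)) := by
    rw [← Finset.sum_add_distrib, Finset.sum_congr rfl key, Finset.sum_const,
      Finset.card_range, nsmul_eq_mul]
    push_cast
    ring
  rw [e1] at e2
  linarith

lemma L7 : ∀ n, ∑ i ∈ Finset.range (n + 1), (-1 : ℝ) ^ i * pellR (2 * (n - i)) =
    pellR n * pellR (n + 1) := by
  intro n
  induction n with
  | zero => simp [pellR]
  | succ m ih =>
    rw [Finset.sum_range_succ']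
    have step : ∀ i ∈ Finset.range (m + 1),
        (-1 : ℝ) ^ (i + 1) * pellR (2 * (m + 1 - (i + 1)))
          = -((-1 : ℝ) ^ i * pellR (2 * (m - i))) := by
      intro i _
      rw [show m + 1 - (i + 1) = m - i by omega]
      ring
    rw [Finset.sum_congr rfl step, Finset.sum_neg_distrib, ih]
    simp only [pow_zero, Nat.sub_zero, one_mul]
    linear_combination -(L4 (m + 1)) + pellR (m + 1) * (L2 m)

theorem pell_product_convolution (n : ℕ) (hn : 1 ≤ n) :
    ∑ i ∈ Finset.range (n + 1), pellR i ^ 2 * pellLucR (n - i) * pellR (n - i) =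
      pellR n * (((n : ℝ) - 1) * pellR (n + 1) + ((n : ℝ) + 1) * pellR (n - 1)) / 8 := by
  obtain ⟨m, rfl⟩ : ∃ m, n = m + 1 := ⟨n - 1, by omega⟩
  have hterm : ∀ i ∈ Finset.range (m + 1 + 1),
      pellR i ^ 2 * pellLucR (m + 1 - i) * pellR (m + 1 - i)
        = (pellLucR (2 * i) * pellR (2 * (m + 1 - i))
            - 2 * ((-1 : ℝ) ^ i * pellR (2 * (m + 1 - i)))) / 8 := by
    intro i _
    have h1 := L4 (m + 1 - i)
    have h2 := L6 i
    rw [mul_assoc, h1, h2]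
    ring
  rw [Finset.sum_congr rfl hterm, ← Finset.sum_div, Finset.sum_sub_distrib,
    ← Finset.mul_sum, S1 (m + 1), L7 (m + 1)]
  have h4 := L4 (m + 1)
  have h2 := L2 m
  rw [show 2 * (m + 1) = 2 * (m + 1) from rfl, ← h4, h2,
    show m + 1 - 1 = m from rfl, show m + 1 + 1 = m + 2 from rfl]
  push_cast
  ring
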